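/- Let W : ℕ → A be an infinite word over a finite alphabet A. The following two properties are equivalent: (a) for every k there exists N(k) such that every factor of W of length N(k) contains every factor of W of length k as a factor (i.e. W is uniformly recurrent); (b) for every infinite word V : ℕ → A, if every finite factor of V is a factor of W, then every finite factor of W is a factor of V. -/

import Mathlib

/-- The finite word `u` occurs in the infinite word `W` at position `i`. -/
def occursAt {A : Type*} (W : ℕ → A) (u : List A) (i : ℕ) : Prop :=
  u = (List.range u.length).map (fun j => W (i + j))

/-- `u` is a factor (subword) of the infinite word `W`. -/
def IsFactor {A : Type*} (W : ℕ → A) (u : List A) : Prop :=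
  ∃ i, occursAt W u i

lemma occursAt_iff {A : Type*} {W : ℕ → A} {u : List A} {i : ℕ} :
    occursAt W u i ↔ ∀ j (h : j < u.length), u[j] = W (i + j) := by
  constructor
  · intro h j hj
    rw [List.getElem_of_eq h]
    simp
  · intro h
    apply List.ext_getElem (by simp)
    intro j h1 h2
    simpa using h j h1

lemma occursAt_drop {A : Type*} {W : ℕ → A} {u : List A} {i : ℕ}
    (h : occursAt W u i) (s : ℕ) : occursAt W (u.drop s) (i + s) := by
  rw [occursAt_iff] at h ⊢
  intro j hj
  rw [List.getElem_drop, h (s + j) (by simp at hj; omega)]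
  congr 1
  omega

lemma occursAt_take {A : Type*} {W : ℕ → A} {u : List A} {i : ℕ}
    (h : occursAt W u i) (n : ℕ) : occursAt W (u.take n) i := by
  rw [occursAt_iff] at h ⊢
  intro j hj
  rw [List.getElem_take]
  exact h j (by simp at hj; omega)

lemma infix_of_occursAt {A : Type*} {W : ℕ → A} {u v : List A} {i s : ℕ}
    (hu : occursAt W u i) (hv : occursAt W v (i + s)) (h : s + v.length ≤ u.length) :
    v <:+: u := by
  have hvu : v = (u.drop s).take v.length := by
    apply List.ext_getElem
    · simp; omega
    · intro j h1 h2
      rw [occursAt_iff] at hu hv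
      simp only [List.getElem_take, List.getElem_drop]
      rw [hu (s + j) (by omega), hv j h1]
      congr 1
      omega
  rw [hvu]
  exact ((List.take_prefix _ _).isInfix).trans ((List.drop_suffix _ _).isInfix)

lemma IsFactor.of_infix {A : Type*} {W : ℕ → A} {u v : List A} (h : v <:+: u)
    (hu : IsFactor W u) : IsFactor W v := by
  obtain ⟨i, hi⟩ := hu
  obtain ⟨s, t, rfl⟩ := h
  have key : ((s ++ v ++ t).drop s.length).take v.length = v := by
    rw [List.append_assoc, List.drop_left, List.take_left]
  exact ⟨i + s.length, key ▸ occursAt_take (occursAt_drop hi s.length) v.length⟩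

/-- Equivalence of the two characterizations of uniform recurrence: (a) for every
`k` there is `N` such that every factor of length `N` contains every factor of
length `k`; (b) any infinite word `V` all of whose factors are factors of `W`
has, conversely, all factors of `W` among its factors. -/
theorem uniformlyRecurrent_iff_factor_maximal {A : Type*} [Fintype A] (W : ℕ → A) :
    (∀ k : ℕ, ∃ N : ℕ, ∀ u, IsFactor W u → u.length = N →
        ∀ v, IsFactor W v → v.length = k → v <:+: u) ↔
    (∀ V : ℕ → A, (∀ u, IsFactor V u → IsFactor W u) →
        ∀ u, IsFactor W u → IsFactor V u) := by
  constructor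
  · intro ha V hVW u hu
    obtain ⟨N, hN⟩ := ha u.length
    have hpref : IsFactor V ((List.range N).map V) := ⟨0, by simp [occursAt]⟩
    have hWfac := hVW _ hpref
    have hinf : u <:+: (List.range N).map V :=
      hN _ hWfac (by simp) u hu rfl
    exact IsFactor.of_infix hinf hpref
  · intro hb k
    by_contra hcon
    push_neg at hcon
    choose u hufac hulen v hvfac hvlen havoid using hcon
    -- pigeonhole on v
    have hfin := Finite.exists_infinite_fiber
      (fun N (j : Fin k) => (v N).getD j (W 0))
    obtain ⟨y, hy'⟩ := hfin
    have hy := Set.infinite_coe_iff.mp hy'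
    obtain ⟨N₀, hN₀⟩ := hy.nonempty
    set v₀ := v N₀ with hv₀
    have hveq : ∀ N, N ∈ (fun N (j : Fin k) => (v N).getD j (W 0)) ⁻¹' {y} →
        v N = v₀ := by
      intro N hN
      apply List.ext_getElem (by rw [hvlen, hv₀, hvlen])
      intro j h1 h2
      have hjk : j < k := by rwa [hvlen] at h1
      have e1 := congrFun (hN.trans hN₀.symm) ⟨j, hjk⟩
      simp only at e1
      rwa [List.getD_eq_getElem _ _ h1, List.getD_eq_getElem _ _ h2] at e1
    -- for each m, a long factor avoiding v₀
    have hlong : ∀ m : ℕ, ∃ N, m < N ∧ v N = v₀ ∧ ¬ v₀ <:+: u N := by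
      intro m
      obtain ⟨N, hNs, hNm⟩ := hy.exists_gt m
      have := hveq N hNs
      exact ⟨N, hNm, this, this ▸ havoid N⟩
    choose M hMgt hMv hMavoid using hlong
    choose p hp using fun m => hufac (M m)
    -- build V by ultrafilter limit
    set U : Ultrafilter ℕ := Ultrafilter.of Filter.atTop with hUdef
    have hUle : (U : Filter ℕ) ≤ Filter.atTop := Ultrafilter.of_le _
    have hex : ∀ n : ℕ, ∃ a : A, ∀ᶠ m in (U : Filter ℕ), W (p m + n) = a := by
      intro n
      by_contra hno
      push_neg at hno
      have hall : ∀ᶠ m in (U : Filter ℕ), ∀ a : A, W (p m + n) ≠ a := by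
        rw [Filter.eventually_all]
        intro a
        exact hno a
      obtain ⟨m, hm⟩ := hall.exists
      exact hm (W (p m + n)) rfl
    choose V hV using hex
    have hVfac : ∀ w, IsFactor V w → IsFactor W w := by
      rintro w ⟨s, hs⟩
      have hev : ∀ᶠ m in (U : Filter ℕ), ∀ n ∈ Finset.range (s + w.length),
          W (p m + n) = V n := by
        rw [Filter.eventually_all_finset]
        intro n _
        exact hV n
      obtain ⟨m, hm⟩ := hev.exists
      refine ⟨p m + s, occursAt_iff.2 fun j hj => ?_⟩
      rw [occursAt_iff.1 hs j hj, ← hm (s + j) (by simp; omega)]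
      congr 1
      omega
    have hv₀W : IsFactor W v₀ := hvfac N₀
    have hv₀V : IsFactor V v₀ := hb V hVfac v₀ hv₀W
    obtain ⟨s, hs⟩ := hv₀V
    have hev : ∀ᶠ m in (U : Filter ℕ), (∀ n ∈ Finset.range (s + k),
        W (p m + n) = V n) ∧ s + k ≤ m := by
      refine Filter.Eventually.and ?_ (hUle (Filter.eventually_ge_atTop (s + k)))
      rw [Filter.eventually_all_finset]
      intro n _
      exact hV n
    obtain ⟨m, hm1, hm2⟩ := hev.exists
    have hocc : occursAt W v₀ (p m + s) := by
      refine occursAt_iff.2 fun j hj => ?_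
      have hjk : j < k := by rwa [hv₀, hvlen] at hj
      rw [occursAt_iff.1 hs j hj, ← hm1 (s + j) (by simp; omega)]
      congr 1
      omega
    have hlen : s + v₀.length ≤ (u (M m)).length := by
      rw [hv₀, hvlen, hulen]
      have := hMgt m
      omega
    exact hMavoid m (infix_of_occursAt (hp m) hocc hlen)
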